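/- Alternating noise, odd path length: On the complete graph on n nodes with path set all simple paths of fixed odd length L ≥ 3, the alternating noise mechanism satisfies: Π = 1 − 2/n − (2/(L+1) + 2/(n−L+1) − 4/n)·α for α ∈ [0, 1/2], and Π = (2 − 2/(L+1) − 2/(n−L+1))·(1 − α) for α ∈ (1/2, 1]. -/

import Mathlib

set_option linter.unusedSectionVars false
set_option maxHeartbeats 1000000


open Finset

/-- Oriented edge set of a directed simple path of length `L` in the complete
graph, given by an injection of its `L+1` nodes. -/
def pedges {V : Type} [DecidableEq V] {L : ℕ} (f : Fin (L + 1) ↪ V) :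
    Finset (V × V) :=
  (Finset.univ : Finset (Fin L)).image (fun i => (f i.castSucc, f i.succ))

/-- The odd edges (1st, 3rd, 5th, ...) of the path. -/
def oddE {V : Type} [DecidableEq V] {L : ℕ} (f : Fin (L + 1) ↪ V) :
    Finset (V × V) :=
  ((Finset.univ : Finset (Fin L)).filter (fun i => i.val % 2 = 0)).image
    (fun i => (f i.castSucc, f i.succ))

/-- The even edges (2nd, 4th, ...) of the path. -/
def evenE {V : Type} [DecidableEq V] {L : ℕ} (f : Fin (L + 1) ↪ V) :
    Finset (V × V) :=
  ((Finset.univ : Finset (Fin L)).filter (fun i => i.val % 2 = 1)).image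
    (fun i => (f i.castSucc, f i.succ))

/-- An adversarial strategy: a distribution over nodes for each observation. -/
def ValidAdv {V : Type} [Fintype V] [DecidableEq V]
    (A : Finset (V × V) → V → ℝ) : Prop :=
  ∀ Q, (∀ v, 0 ≤ A Q v) ∧ (∑ v, A Q v) = 1

/-- Adversary success against the alternating mechanism at utility α ≤ 1/2:
odd edges revealed w.p. α, even edges w.p. α, nothing w.p. 1−2α. -/
def altSuccLow {V : Type} [Fintype V] [DecidableEq V] {L : ℕ} (α : ℝ)
    (A : Finset (V × V) → V → ℝ) (f : Fin (L + 1) ↪ V) : ℝ :=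
  α * (A (oddE f) (f 0) + A (oddE f) (f (Fin.last L)))
    + α * (A (evenE f) (f 0) + A (evenE f) (f (Fin.last L)))
    + (1 - 2 * α) * (A ∅ (f 0) + A ∅ (f (Fin.last L)))

/-- Adversary success against the alternating mechanism at utility α > 1/2:
odd edges revealed w.p. 1−α, even edges w.p. 1−α, full path w.p. 2α−1. -/
def altSuccHigh {V : Type} [Fintype V] [DecidableEq V] {L : ℕ} (α : ℝ)
    (A : Finset (V × V) → V → ℝ) (f : Fin (L + 1) ↪ V) : ℝ :=
  (1 - α) * (A (oddE f) (f 0) + A (oddE f) (f (Fin.last L)))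
    + (1 - α) * (A (evenE f) (f 0) + A (evenE f) (f (Fin.last L)))
    + (2 * α - 1) * (A (pedges f) (f 0) + A (pedges f) (f (Fin.last L)))

/-- Privacy of the alternating mechanism (low-utility branch). -/
noncomputable def altPrivLow (V : Type) [Fintype V] [DecidableEq V] (L : ℕ)
    (α : ℝ) : ℝ :=
  1 - sSup { x : ℝ | ∃ A, ValidAdv A ∧
      x = sInf { y : ℝ | ∃ f : Fin (L + 1) ↪ V, y = altSuccLow α A f } }

/-- Privacy of the alternating mechanism (high-utility branch). -/
noncomputable def altPrivHigh (V : Type) [Fintype V] [DecidableEq V] (L : ℕ)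
    (α : ℝ) : ℝ :=
  1 - sSup { x : ℝ | ∃ A, ValidAdv A ∧
      x = sInf { y : ℝ | ∃ f : Fin (L + 1) ↪ V, y = altSuccHigh α A f } }

namespace AltOdd

variable {V : Type} [Fintype V] [DecidableEq V] {m : ℕ}

lemma oddE_eq (f : Fin (2*m+1+1) ↪ V) :
    oddE f = (univ : Finset (Fin (m+1))).image
      (fun j => (f ⟨2*j.1, by have := j.isLt; omega⟩, f ⟨2*j.1+1, by have := j.isLt; omega⟩)) := by
  ext p
  simp only [oddE, Finset.mem_image, Finset.mem_filter, Finset.mem_univ, true_and]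
  constructor
  · rintro ⟨i, hi, rfl⟩
    refine ⟨⟨i.1/2, by have := i.isLt; omega⟩, ?_⟩
    have h1 : i.castSucc = (⟨2*(i.1/2), by have := i.isLt; omega⟩ : Fin (2*m+1+1)) := by
      apply Fin.ext; simp; omega
    have h2 : i.succ = (⟨2*(i.1/2)+1, by have := i.isLt; omega⟩ : Fin (2*m+1+1)) := by
      apply Fin.ext; simp; omega
    rw [h1, h2]
  · rintro ⟨j, rfl⟩
    refine ⟨⟨2*j.1, by have := j.isLt; omega⟩, by simp, ?_⟩
    have h1 : (⟨2*j.1, by have := j.isLt; omega⟩ : Fin (2*m+1)).castSucc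
        = (⟨2*j.1, by have := j.isLt; omega⟩ : Fin (2*m+1+1)) := by
      apply Fin.ext; simp
    have h2 : (⟨2*j.1, by have := j.isLt; omega⟩ : Fin (2*m+1)).succ
        = (⟨2*j.1+1, by have := j.isLt; omega⟩ : Fin (2*m+1+1)) := by
      apply Fin.ext; simp
    rw [h1, h2]

lemma evenE_eq (f : Fin (2*m+1+1) ↪ V) :
    evenE f = (univ : Finset (Fin m)).image
      (fun j => (f ⟨2*j.1+1, by have := j.isLt; omega⟩, f ⟨2*j.1+2, by have := j.isLt; omega⟩)) := by
  ext p
  simp only [evenE, Finset.mem_image, Finset.mem_filter, Finset.mem_univ, true_and]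
  constructor
  · rintro ⟨i, hi, rfl⟩
    refine ⟨⟨i.1/2, by have := i.isLt; omega⟩, ?_⟩
    have h1 : i.castSucc = (⟨2*(i.1/2)+1, by have := i.isLt; omega⟩ : Fin (2*m+1+1)) := by
      apply Fin.ext; simp; omega
    have h2 : i.succ = (⟨2*(i.1/2)+2, by have := i.isLt; omega⟩ : Fin (2*m+1+1)) := by
      apply Fin.ext; simp; omega
    rw [h1, h2]
  · rintro ⟨j, rfl⟩
    refine ⟨⟨2*j.1+1, by have := j.isLt; omega⟩, by simp, ?_⟩
    have h1 : (⟨2*j.1+1, by have := j.isLt; omega⟩ : Fin (2*m+1)).castSucc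
        = (⟨2*j.1+1, by have := j.isLt; omega⟩ : Fin (2*m+1+1)) := by
      apply Fin.ext; simp
    have h2 : (⟨2*j.1+1, by have := j.isLt; omega⟩ : Fin (2*m+1)).succ
        = (⟨2*j.1+2, by have := j.isLt; omega⟩ : Fin (2*m+1+1)) := by
      apply Fin.ext; simp
    rw [h1, h2]

lemma mem_pedges {L : ℕ} (f : Fin (L+1) ↪ V) (p : V × V) :
    p ∈ pedges f ↔ ∃ i : Fin L, p = (f i.castSucc, f i.succ) := by
  simp [pedges, eq_comm]


/-- vertex set of an observation -/
def vertsQ (Q : Finset (V × V)) : Finset V := Q.image Prod.fst ∪ Q.image Prod.snd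

lemma finj {L : ℕ} (f : Fin (L+1) ↪ V) {i j : Fin (L+1)} : f i = f j ↔ i.1 = j.1 := by
  simp [EmbeddingLike.apply_eq_iff_eq, Fin.ext_iff]

lemma card_oddE (f : Fin (2*m+1+1) ↪ V) : (oddE f).card = m + 1 := by
  rw [oddE_eq]
  rw [Finset.card_image_of_injective _ ?_, Finset.card_univ, Fintype.card_fin]
  intro a b hab
  simp only [Prod.mk.injEq, finj f] at hab
  apply Fin.ext; omega

lemma card_evenE (f : Fin (2*m+1+1) ↪ V) : (evenE f).card = m := by
  rw [evenE_eq]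
  rw [Finset.card_image_of_injective _ ?_, Finset.card_univ, Fintype.card_fin]
  intro a b hab
  simp only [Prod.mk.injEq, finj f] at hab
  apply Fin.ext; omega

lemma card_pedges {L : ℕ} (f : Fin (L+1) ↪ V) : (pedges f).card = L := by
  rw [pedges, Finset.card_image_of_injective _ ?_, Finset.card_univ, Fintype.card_fin]
  intro a b hab
  simp only [Prod.mk.injEq, finj f, Fin.coe_castSucc] at hab
  apply Fin.ext; exact hab.1

lemma mem_vertsQ {Q : Finset (V × V)} {v : V} :
    v ∈ vertsQ Q ↔ (∃ p ∈ Q, p.1 = v) ∨ (∃ p ∈ Q, p.2 = v) := by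
  simp [vertsQ]

lemma verts_oddE (f : Fin (2*m+1+1) ↪ V) :
    vertsQ (oddE f) = univ.image f := by
  ext v
  simp only [mem_vertsQ, oddE_eq, Finset.mem_image, Finset.mem_univ, true_and]
  constructor
  · rintro (⟨p, ⟨j, rfl⟩, rfl⟩ | ⟨p, ⟨j, rfl⟩, rfl⟩)
    · exact ⟨_, rfl⟩
    · exact ⟨_, rfl⟩
  · rintro ⟨i, rfl⟩
    rcases Nat.even_or_odd i.1 with ⟨j, hj⟩ | ⟨j, hj⟩
    · left
      refine ⟨_, ⟨⟨j, by have := i.isLt; omega⟩, rfl⟩, ?_⟩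
      simp only [finj f] <;> omega
    · right
      refine ⟨_, ⟨⟨j, by have := i.isLt; omega⟩, rfl⟩, ?_⟩
      simp only [finj f] <;> omega

lemma card_verts_oddE (f : Fin (2*m+1+1) ↪ V) :
    (vertsQ (oddE f)).card = 2*m+2 := by
  rw [verts_oddE, Finset.card_image_of_injective _ f.injective, Finset.card_univ,
    Fintype.card_fin]

lemma zero_mem_verts_oddE (f : Fin (2*m+1+1) ↪ V) : f 0 ∈ vertsQ (oddE f) := by
  rw [verts_oddE]; exact Finset.mem_image_of_mem f (Finset.mem_univ _)

lemma last_mem_verts_oddE (f : Fin (2*m+1+1) ↪ V) :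
    f (Fin.last (2*m+1)) ∈ vertsQ (oddE f) := by
  rw [verts_oddE]; exact Finset.mem_image_of_mem f (Finset.mem_univ _)

lemma verts_evenE (f : Fin (2*m+1+1) ↪ V) :
    vertsQ (evenE f) = (univ : Finset (Fin (2*m))).image
      (fun j => f ⟨j.1+1, by have := j.isLt; omega⟩) := by
  ext v
  simp only [mem_vertsQ, evenE_eq, Finset.mem_image, Finset.mem_univ, true_and]
  constructor
  · rintro (⟨p, ⟨j, rfl⟩, rfl⟩ | ⟨p, ⟨j, rfl⟩, rfl⟩)
    · refine ⟨⟨2*j.1, by have := j.isLt; omega⟩, rfl⟩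
    · refine ⟨⟨2*j.1+1, by have := j.isLt; omega⟩, ?_⟩
      simp only [finj f] <;> omega
  · rintro ⟨i, rfl⟩
    rcases Nat.even_or_odd i.1 with ⟨j, hj⟩ | ⟨j, hj⟩
    · left
      refine ⟨_, ⟨⟨j, by have := i.isLt; omega⟩, rfl⟩, ?_⟩
      simp only [finj f] <;> omega
    · right
      refine ⟨_, ⟨⟨j, by have := i.isLt; omega⟩, rfl⟩, ?_⟩
      simp only [finj f] <;> omega

lemma card_verts_evenE (f : Fin (2*m+1+1) ↪ V) :
    (vertsQ (evenE f)).card = 2*m := by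
  rw [verts_evenE, Finset.card_image_of_injective _ ?_, Finset.card_univ, Fintype.card_fin]
  intro a b hab
  simp only [finj f] at hab
  apply Fin.ext; omega

lemma zero_not_mem_verts_evenE (f : Fin (2*m+1+1) ↪ V) :
    f 0 ∉ vertsQ (evenE f) := by
  rw [verts_evenE]
  simp only [Finset.mem_image, Finset.mem_univ, true_and, not_exists]
  intro j h
  rw [finj f] at h
  simp at h

lemma last_not_mem_verts_evenE (f : Fin (2*m+1+1) ↪ V) :
    f (Fin.last (2*m+1)) ∉ vertsQ (evenE f) := by
  rw [verts_evenE]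
  simp only [Finset.mem_image, Finset.mem_univ, true_and, not_exists]
  intro j h
  rw [finj f] at h
  simp [Fin.last] at h
  have := j.isLt; omega

lemma pedges_S (f : Fin (2*m+1+1) ↪ V) :
    (pedges f).image Prod.fst \ (pedges f).image Prod.snd = {f 0} := by
  ext v
  simp only [Finset.mem_sdiff, Finset.mem_image, Finset.mem_singleton, mem_pedges]
  constructor
  · rintro ⟨⟨p, ⟨i, rfl⟩, rfl⟩, hn⟩
    by_contra hne
    have hi1 : i.1 ≠ 0 := by
      intro h
      apply hne
      simp only [finj f, Fin.coe_castSucc, Fin.val_zero]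
      exact h
    apply hn
    have hil : i.1 - 1 < 2*m+1 := by have := i.isLt; omega
    refine ⟨(f (⟨i.1-1, hil⟩ : Fin (2*m+1)).castSucc, f (⟨i.1-1, hil⟩ : Fin (2*m+1)).succ),
      ⟨⟨i.1-1, hil⟩, rfl⟩, ?_⟩
    simp only [finj f, Fin.val_succ, Fin.coe_castSucc]
    omega
  · rintro rfl
    constructor
    · refine ⟨(f (⟨0, by omega⟩ : Fin (2*m+1)).castSucc, f (⟨0, by omega⟩ : Fin (2*m+1)).succ),
        ⟨⟨0, by omega⟩, rfl⟩, ?_⟩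
      simp only [finj f, Fin.coe_castSucc, Fin.val_zero]
    · rintro ⟨p, ⟨i, rfl⟩, hp⟩
      rw [finj f] at hp
      simp at hp

lemma pedges_T (f : Fin (2*m+1+1) ↪ V) :
    (pedges f).image Prod.snd \ (pedges f).image Prod.fst = {f (Fin.last (2*m+1))} := by
  ext v
  simp only [Finset.mem_sdiff, Finset.mem_image, Finset.mem_singleton, mem_pedges]
  constructor
  · rintro ⟨⟨p, ⟨i, rfl⟩, rfl⟩, hn⟩
    by_contra hne
    have hi1 : i.1 + 1 ≠ 2*m+1 := by
      intro h
      apply hne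
      simp only [finj f, Fin.val_succ, Fin.val_last]
      omega
    apply hn
    have hil : i.1 + 1 < 2*m+1 := by have := i.isLt; omega
    refine ⟨(f (⟨i.1+1, hil⟩ : Fin (2*m+1)).castSucc, f (⟨i.1+1, hil⟩ : Fin (2*m+1)).succ),
      ⟨⟨i.1+1, hil⟩, rfl⟩, ?_⟩
    simp only [finj f, Fin.val_succ, Fin.coe_castSucc]
  · rintro rfl
    constructor
    · refine ⟨(f (⟨2*m, by omega⟩ : Fin (2*m+1)).castSucc, f (⟨2*m, by omega⟩ : Fin (2*m+1)).succ),
        ⟨⟨2*m, by omega⟩, rfl⟩, ?_⟩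
      simp only [finj f, Fin.val_succ, Fin.val_last]
    · rintro ⟨p, ⟨i, rfl⟩, hp⟩
      rw [finj f] at hp
      simp [Fin.val_last] at hp
      have := i.isLt; omega


/-- The optimal adversary. -/
noncomputable def Adv (m : ℕ) {V : Type} [Fintype V] [DecidableEq V]
    (Q : Finset (V × V)) (v : V) : ℝ :=
  if Q.card = m+1 then (if v ∈ vertsQ Q then ((vertsQ Q).card : ℝ)⁻¹ else 0)
  else if Q.card = m then
    (if v ∉ vertsQ Q then ((Fintype.card V - (vertsQ Q).card : ℕ) : ℝ)⁻¹ else 0)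
  else if Q.card = 2*m+1 then
    (if (Q.image Prod.fst \ Q.image Prod.snd).Nonempty ∧
        (Q.image Prod.snd \ Q.image Prod.fst).Nonempty then
      (if v ∈ Q.image Prod.fst \ Q.image Prod.snd then
          (2*((Q.image Prod.fst \ Q.image Prod.snd).card : ℝ))⁻¹ else 0)
        + (if v ∈ Q.image Prod.snd \ Q.image Prod.fst then
          (2*((Q.image Prod.snd \ Q.image Prod.fst).card : ℝ))⁻¹ else 0)
    else (Fintype.card V : ℝ)⁻¹)
  else (Fintype.card V : ℝ)⁻¹

lemma Adv_nonneg (hm : 1 ≤ m) (Q : Finset (V × V)) (v : V) : 0 ≤ Adv m Q v := by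
  unfold Adv
  split_ifs <;> positivity

lemma sum_indicator_inv (W : Finset V) (hW : W.Nonempty) :
    ∑ v : V, (if v ∈ W then ((W.card : ℝ))⁻¹ else 0) = 1 := by
  rw [Finset.sum_ite_mem, Finset.univ_inter, Finset.sum_const, nsmul_eq_mul]
  rw [mul_inv_cancel₀]
  exact_mod_cast Finset.card_ne_zero.mpr hW

lemma Adv_sum (hm : 1 ≤ m) (hV : 2*m+1 < Fintype.card V) (Q : Finset (V × V)) :
    ∑ v, Adv m Q v = 1 := by
  have hn0 : (0:ℝ) < (Fintype.card V : ℝ) := by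
    exact_mod_cast Nat.pos_of_ne_zero (by omega)
  have huni : ∑ _v : V, ((Fintype.card V : ℝ))⁻¹ = 1 := by
    rw [Finset.sum_const, Finset.card_univ, nsmul_eq_mul, mul_inv_cancel₀ (ne_of_gt hn0)]
  unfold Adv
  split_ifs with h1 h2 h3 h4
  · -- card = m+1 : uniform on verts
    apply sum_indicator_inv
    rw [← Finset.card_ne_zero]
    intro hc
    have : (vertsQ Q).card ≠ 0 := by
      have hQ : Q.Nonempty := Finset.card_ne_zero.mp (by omega)
      obtain ⟨p, hp⟩ := hQ
      apply Finset.card_ne_zero.mpr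
      exact ⟨p.1, mem_vertsQ.mpr (Or.inl ⟨p, hp, rfl⟩)⟩
    exact this hc
  · -- card = m : uniform off verts
    have hle : (vertsQ Q).card ≤ 2*m := by
      calc (vertsQ Q).card ≤ (Q.image Prod.fst).card + (Q.image Prod.snd).card :=
            Finset.card_union_le _ _
        _ ≤ Q.card + Q.card := by
            gcongr <;> exact Finset.card_image_le
        _ = 2*m := by omega
    have hcompl : ∑ v : V, (if v ∉ vertsQ Q then ((Fintype.card V - (vertsQ Q).card : ℕ) : ℝ)⁻¹ else 0)
        = ∑ v : V, (if v ∈ (vertsQ Q)ᶜ then (((vertsQ Q)ᶜ.card : ℝ))⁻¹ else 0) := by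
      apply Finset.sum_congr rfl
      intro v _
      rw [Finset.card_compl]
      congr 1
      · simp [Finset.mem_compl]
    rw [hcompl]
    apply sum_indicator_inv
    rw [← Finset.card_pos, Finset.card_compl]
    omega
  · -- card = 2m+1, both S T nonempty
    obtain ⟨hS, hT⟩ := h4
    rw [Finset.sum_add_distrib]
    have e1 : ∀ (W : Finset V), W.Nonempty →
        ∑ v : V, (if v ∈ W then (2*((W.card : ℝ)))⁻¹ else 0) = 2⁻¹ := by
      intro W hW
      rw [Finset.sum_ite_mem, Finset.univ_inter, Finset.sum_const, nsmul_eq_mul,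
        mul_inv, ← mul_assoc, mul_comm ((W.card:ℝ)) _, mul_assoc, mul_inv_cancel₀, mul_one]
      exact_mod_cast Finset.card_ne_zero.mpr hW
    rw [e1 _ hS, e1 _ hT]
    norm_num
  · exact huni
  · exact huni

lemma Adv_valid (hm : 1 ≤ m) (hV : 2*m+1 < Fintype.card V) :
    ValidAdv (V := V) (Adv m) :=
  fun Q => ⟨Adv_nonneg hm Q, Adv_sum hm hV Q⟩


lemma Adv_oddE (hm : 1 ≤ m) (f : Fin (2*m+1+1) ↪ V) {v : V} (hv : v ∈ vertsQ (oddE f)) :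
    Adv m (oddE f) v = ((2*m+2 : ℕ) : ℝ)⁻¹ := by
  unfold Adv
  rw [if_pos (card_oddE f), if_pos hv, card_verts_oddE f]

lemma Adv_evenE (hm : 1 ≤ m) (f : Fin (2*m+1+1) ↪ V) {v : V} (hv : v ∉ vertsQ (evenE f)) :
    Adv m (evenE f) v = ((Fintype.card V - 2*m : ℕ) : ℝ)⁻¹ := by
  unfold Adv
  rw [if_neg (by rw [card_evenE f]; omega), if_pos (card_evenE f), if_pos hv,
    card_verts_evenE f]

lemma Adv_empty (hm : 1 ≤ m) (v : V) :
    Adv m (∅ : Finset (V × V)) v = ((Fintype.card V : ℕ) : ℝ)⁻¹ := by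
  unfold Adv
  rw [if_neg (by simp), if_neg (by simp; omega), if_neg (by simp)]

lemma Adv_pedges (hm : 1 ≤ m) (f : Fin (2*m+1+1) ↪ V) (v : V) :
    Adv m (pedges f) v = (if v = f 0 then (2:ℝ)⁻¹ else 0)
      + (if v = f (Fin.last (2*m+1)) then (2:ℝ)⁻¹ else 0) := by
  unfold Adv
  rw [pedges_S f, pedges_T f, card_pedges f]
  rw [if_neg (by omega), if_neg (by omega), if_pos rfl,
    if_pos ⟨Finset.singleton_nonempty _, Finset.singleton_nonempty _⟩]
  simp only [Finset.mem_singleton, Finset.card_singleton, Nat.cast_one, mul_one]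

lemma Adv_pedges_ends (hm : 1 ≤ m) (f : Fin (2*m+1+1) ↪ V) :
    Adv m (pedges f) (f 0) + Adv m (pedges f) (f (Fin.last (2*m+1))) = 1 := by
  have hne : f 0 ≠ f (Fin.last (2*m+1)) := by
    rw [Ne, finj f]; simp [Fin.val_last]
  rw [Adv_pedges hm f, Adv_pedges hm f,
    if_pos rfl, if_neg hne, if_neg hne.symm, if_pos rfl]
  norm_num


lemma succLow_const (hm : 1 ≤ m) (α : ℝ) (f : Fin (2*m+1+1) ↪ V) :
    altSuccLow α (Adv m) f
      = α * (2*((2*m+2 : ℕ) : ℝ)⁻¹) + α * (2*((Fintype.card V - 2*m : ℕ) : ℝ)⁻¹)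
        + (1 - 2*α) * (2*((Fintype.card V : ℕ) : ℝ)⁻¹) := by
  unfold altSuccLow
  rw [Adv_oddE hm f (zero_mem_verts_oddE f), Adv_oddE hm f (last_mem_verts_oddE f),
    Adv_evenE hm f (zero_not_mem_verts_evenE f), Adv_evenE hm f (last_not_mem_verts_evenE f),
    Adv_empty hm, Adv_empty hm]
  ring

lemma succHigh_const (hm : 1 ≤ m) (α : ℝ) (f : Fin (2*m+1+1) ↪ V) :
    altSuccHigh α (Adv m) f
      = (1-α) * (2*((2*m+2 : ℕ) : ℝ)⁻¹) + (1-α) * (2*((Fintype.card V - 2*m : ℕ) : ℝ)⁻¹)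
        + (2*α - 1) := by
  unfold altSuccHigh
  rw [Adv_oddE hm f (zero_mem_verts_oddE f), Adv_oddE hm f (last_mem_verts_oddE f),
    Adv_evenE hm f (zero_not_mem_verts_evenE f), Adv_evenE hm f (last_not_mem_verts_evenE f),
    Adv_pedges_ends hm f]
  ring


lemma fiber_card_const (i0 : Fin (2*m+1+1)) (v w : V) :
    (univ.filter (fun f : Fin (2*m+1+1) ↪ V => f i0 = v)).card
      = (univ.filter (fun f : Fin (2*m+1+1) ↪ V => f i0 = w)).card := by
  refine Finset.card_bij' (fun f _ => f.trans (Equiv.swap v w).toEmbedding)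
    (fun f _ => f.trans (Equiv.swap v w).toEmbedding) ?_ ?_ ?_ ?_
  · intro f hf
    simp only [Finset.mem_filter, Finset.mem_univ, true_and] at hf ⊢
    rw [Function.Embedding.trans_apply, hf]
    simp [Equiv.swap_apply_left]
  · intro f hf
    simp only [Finset.mem_filter, Finset.mem_univ, true_and] at hf ⊢
    rw [Function.Embedding.trans_apply, hf]
    simp [Equiv.swap_apply_right]
  · intro f _
    apply DFunLike.ext
    intro x
    simp [Function.Embedding.trans_apply]
  · intro f _
    apply DFunLike.ext
    intro x
    simp [Function.Embedding.trans_apply]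

lemma sum_fiber (hV : 2*m+1 < Fintype.card V) (B : V → ℝ) (hB1 : ∑ v, B v = 1)
    (i0 : Fin (2*m+1+1)) :
    (Fintype.card V : ℝ) * ∑ f : Fin (2*m+1+1) ↪ V, B (f i0)
      = (Fintype.card (Fin (2*m+1+1) ↪ V) : ℝ) := by
  have hne : Nonempty V := by
    rw [← Fintype.card_pos_iff]; omega
  obtain ⟨v0⟩ := hne
  set c : V → ℕ := fun v => (univ.filter (fun f : Fin (2*m+1+1) ↪ V => f i0 = v)).card with hc
  have h1 : ∑ f : Fin (2*m+1+1) ↪ V, B (f i0) = ∑ v : V, (c v : ℝ) * B v := by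
    rw [← Finset.sum_fiberwise univ (fun f : Fin (2*m+1+1) ↪ V => f i0)
      (fun f => B (f i0))]
    apply Finset.sum_congr rfl
    intro v _
    have hcg : ∀ f ∈ univ.filter (fun f : Fin (2*m+1+1) ↪ V => f i0 = v),
        B (f i0) = B v := by
      intro f hf
      rw [Finset.mem_filter] at hf
      rw [hf.2]
    rw [Finset.sum_congr rfl hcg, Finset.sum_const, nsmul_eq_mul]
  have h2 : ∀ v, c v = c v0 := fun v => fiber_card_const i0 v v0
  have h3 : Fintype.card V * c v0 = Fintype.card (Fin (2*m+1+1) ↪ V) := by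
    have := Finset.card_eq_sum_card_fiberwise
      (f := fun f : Fin (2*m+1+1) ↪ V => f i0) (s := univ) (t := univ)
      (fun x _ => Finset.mem_univ _)
    rw [Finset.card_univ] at this
    rw [this, Finset.sum_congr rfl (fun v _ => (h2 v))]
    rw [Finset.sum_const, Finset.card_univ, smul_eq_mul]
  rw [h1, Finset.sum_congr rfl (fun v _ => by rw [h2 v]), ← Finset.mul_sum, ← mul_assoc,
    hB1, mul_one]
  exact_mod_cast congrArg (Nat.cast : ℕ → ℝ) h3


/-- Composition with a permutation of positions, as an equiv of embeddings. -/
def compPerm {I : Type} (σ : Equiv.Perm I) : (I ↪ V) ≃ (I ↪ V) where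
  toFun f := σ.toEmbedding.trans f
  invFun f := σ.symm.toEmbedding.trans f
  left_inv f := by
    apply DFunLike.ext; intro x
    simp [Function.Embedding.trans_apply]
  right_inv f := by
    apply DFunLike.ext; intro x
    simp [Function.Embedding.trans_apply]

lemma oddE_comp (f : Fin (2*m+1+1) ↪ V) (σ : Equiv.Perm (Fin (2*m+1+1)))
    (hσ : ∀ j : Fin (m+1), ∃ j' : Fin (m+1),
      σ ⟨2*j.1, by have := j.isLt; omega⟩ = ⟨2*j'.1, by have := j'.isLt; omega⟩ ∧
      σ ⟨2*j.1+1, by have := j.isLt; omega⟩ = ⟨2*j'.1+1, by have := j'.isLt; omega⟩) :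
    oddE (σ.toEmbedding.trans f) = oddE f := by
  apply Finset.eq_of_subset_of_card_le
  · rw [oddE_eq (σ.toEmbedding.trans f), oddE_eq f]
    intro p hp
    rw [Finset.mem_image] at hp ⊢
    obtain ⟨j, _, rfl⟩ := hp
    obtain ⟨j', h1, h2⟩ := hσ j
    refine ⟨j', Finset.mem_univ _, ?_⟩
    simp only [Function.Embedding.trans_apply, Equiv.coe_toEmbedding]
    rw [h1, h2]
  · rw [card_oddE, card_oddE]

lemma sum_comp_odd (A : Finset (V × V) → V → ℝ) (σ : Equiv.Perm (Fin (2*m+1+1)))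
    (hσ : ∀ j : Fin (m+1), ∃ j' : Fin (m+1),
      σ ⟨2*j.1, by have := j.isLt; omega⟩ = ⟨2*j'.1, by have := j'.isLt; omega⟩ ∧
      σ ⟨2*j.1+1, by have := j.isLt; omega⟩ = ⟨2*j'.1+1, by have := j'.isLt; omega⟩)
    (i0 : Fin (2*m+1+1)) :
    ∑ f : Fin (2*m+1+1) ↪ V, A (oddE f) (f (σ i0))
      = ∑ f : Fin (2*m+1+1) ↪ V, A (oddE f) (f i0) := by
  have := Equiv.sum_comp (compPerm (V := V) σ)
    (fun f : Fin (2*m+1+1) ↪ V => A (oddE f) (f i0))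
  rw [← this]
  apply Finset.sum_congr rfl
  intro f _
  have h1 : (compPerm (V := V) σ) f = σ.toEmbedding.trans f := rfl
  rw [h1, oddE_comp f σ hσ]
  congr 1

lemma ds_A {α : Type} [DecidableEq α] {A B C D : α}
    (hCB : C ≠ B) (hDB : D ≠ B) :
    ((Equiv.swap A B).trans (Equiv.swap C D)) A = B := by
  rw [Equiv.trans_apply, Equiv.swap_apply_left,
    Equiv.swap_apply_of_ne_of_ne (Ne.symm hCB) (Ne.symm hDB)]

lemma ds_B {α : Type} [DecidableEq α] {A B C D : α}
    (hCA : C ≠ A) (hDA : D ≠ A) :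
    ((Equiv.swap A B).trans (Equiv.swap C D)) B = A := by
  rw [Equiv.trans_apply, Equiv.swap_apply_right,
    Equiv.swap_apply_of_ne_of_ne (Ne.symm hCA) (Ne.symm hDA)]

lemma ds_C {α : Type} [DecidableEq α] {A B C D : α}
    (hCA : C ≠ A) (hCB : C ≠ B) :
    ((Equiv.swap A B).trans (Equiv.swap C D)) C = D := by
  rw [Equiv.trans_apply, Equiv.swap_apply_of_ne_of_ne hCA hCB,
    Equiv.swap_apply_left]

lemma ds_D {α : Type} [DecidableEq α] {A B C D : α}
    (hDA : D ≠ A) (hDB : D ≠ B) :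
    ((Equiv.swap A B).trans (Equiv.swap C D)) D = C := by
  rw [Equiv.trans_apply, Equiv.swap_apply_of_ne_of_ne hDA hDB,
    Equiv.swap_apply_right]

lemma ds_other {α : Type} [DecidableEq α] {A B C D x : α}
    (h1 : x ≠ A) (h2 : x ≠ B) (h3 : x ≠ C) (h4 : x ≠ D) :
    ((Equiv.swap A B).trans (Equiv.swap C D)) x = x := by
  rw [Equiv.trans_apply, Equiv.swap_apply_of_ne_of_ne h1 h2,
    Equiv.swap_apply_of_ne_of_ne h3 h4]

/-- block transposition moving block 0 to block j -/
def piPerm (m : ℕ) (j : Fin (m+1)) : Equiv.Perm (Fin (2*m+1+1)) :=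
  (Equiv.swap ⟨0, by omega⟩ ⟨2*j.1, by have := j.isLt; omega⟩).trans
    (Equiv.swap ⟨1, by omega⟩ ⟨2*j.1+1, by have := j.isLt; omega⟩)

/-- block transposition moving block m to block j -/
def rhoPerm (m : ℕ) (j : Fin (m+1)) : Equiv.Perm (Fin (2*m+1+1)) :=
  (Equiv.swap ⟨2*m, by omega⟩ ⟨2*j.1, by have := j.isLt; omega⟩).trans
    (Equiv.swap ⟨2*m+1, by omega⟩ ⟨2*j.1+1, by have := j.isLt; omega⟩)

lemma fmk_eq {N : ℕ} {a b : ℕ} {ha : a < N} {hb : b < N} (h : a = b) :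
    (⟨a, ha⟩ : Fin N) = ⟨b, hb⟩ := by apply Fin.ext; simpa

lemma fmk_ne {N : ℕ} {a b : ℕ} {ha : a < N} {hb : b < N} (h : a ≠ b) :
    (⟨a, ha⟩ : Fin N) ≠ ⟨b, hb⟩ := by
  intro hc; apply h; exact congrArg Fin.val hc

lemma piPerm_blocks (j : Fin (m+1)) : ∀ a : Fin (m+1), ∃ a' : Fin (m+1),
    (piPerm m j) ⟨2*a.1, by have := a.isLt; omega⟩ = ⟨2*a'.1, by have := a'.isLt; omega⟩ ∧
    (piPerm m j) ⟨2*a.1+1, by have := a.isLt; omega⟩ = ⟨2*a'.1+1, by have := a'.isLt; omega⟩ := by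
  intro a
  have haLt := a.isLt
  have hjLt := j.isLt
  unfold piPerm
  by_cases h0 : a.1 = 0
  · refine ⟨j, ?_, ?_⟩
    · rw [fmk_eq (a := 2*a.1) (b := 0) (hb := by omega) (by omega)]
      apply ds_A <;> (apply fmk_ne; omega)
    · rw [fmk_eq (a := 2*a.1+1) (b := 1) (hb := by omega) (by omega)]
      apply ds_C <;> (apply fmk_ne; omega)
  · by_cases hj : a.1 = j.1
    · refine ⟨⟨0, by omega⟩, ?_, ?_⟩
      · rw [fmk_eq (a := 2*a.1) (b := 2*j.1) (hb := by omega) (by omega)]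
        refine (ds_B ?_ ?_).trans (fmk_eq rfl) <;> (apply fmk_ne; omega)
      · rw [fmk_eq (a := 2*a.1+1) (b := 2*j.1+1) (hb := by omega) (by omega)]
        refine (ds_D ?_ ?_).trans (fmk_eq rfl) <;> (apply fmk_ne; omega)
    · refine ⟨a, ?_, ?_⟩
      · apply ds_other <;> (apply fmk_ne; omega)
      · apply ds_other <;> (apply fmk_ne; omega)

lemma rhoPerm_blocks (j : Fin (m+1)) : ∀ a : Fin (m+1), ∃ a' : Fin (m+1),
    (rhoPerm m j) ⟨2*a.1, by have := a.isLt; omega⟩ = ⟨2*a'.1, by have := a'.isLt; omega⟩ ∧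
    (rhoPerm m j) ⟨2*a.1+1, by have := a.isLt; omega⟩ = ⟨2*a'.1+1, by have := a'.isLt; omega⟩ := by
  intro a
  have haLt := a.isLt
  have hjLt := j.isLt
  unfold rhoPerm
  by_cases h0 : a.1 = m
  · refine ⟨j, ?_, ?_⟩
    · rw [fmk_eq (a := 2*a.1) (b := 2*m) (hb := by omega) (by omega)]
      apply ds_A <;> (apply fmk_ne; omega)
    · rw [fmk_eq (a := 2*a.1+1) (b := 2*m+1) (hb := by omega) (by omega)]
      apply ds_C <;> (apply fmk_ne; omega)
  · by_cases hj : a.1 = j.1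
    · refine ⟨⟨m, by omega⟩, ?_, ?_⟩
      · rw [fmk_eq (a := 2*a.1) (b := 2*j.1) (hb := by omega) (by omega)]
        refine (ds_B ?_ ?_).trans (fmk_eq rfl) <;> (apply fmk_ne; omega)
      · rw [fmk_eq (a := 2*a.1+1) (b := 2*j.1+1) (hb := by omega) (by omega)]
        refine (ds_D ?_ ?_).trans (fmk_eq rfl) <;> (apply fmk_ne; omega)
    · refine ⟨a, ?_, ?_⟩
      · apply ds_other <;> (apply fmk_ne; omega)
      · apply ds_other <;> (apply fmk_ne; omega)

lemma piPerm_zero (j : Fin (m+1)) :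
    (piPerm m j) (0 : Fin (2*m+1+1)) = ⟨2*j.1, by have := j.isLt; omega⟩ := by
  have hjLt := j.isLt
  unfold piPerm
  have h : (0 : Fin (2*m+1+1)) = ⟨0, by omega⟩ := rfl
  rw [h]
  apply ds_A <;> (apply fmk_ne; omega)

lemma rhoPerm_last (j : Fin (m+1)) :
    (rhoPerm m j) (Fin.last (2*m+1)) = ⟨2*j.1+1, by have := j.isLt; omega⟩ := by
  have hjLt := j.isLt
  unfold rhoPerm
  have h : (Fin.last (2*m+1)) = (⟨2*m+1, by omega⟩ : Fin (2*m+1+1)) := rfl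
  rw [h]
  apply ds_C <;> (apply fmk_ne; omega)

lemma sum_parity (g : Fin (2*m+1+1) → ℝ) :
    ∑ j : Fin (m+1), (g ⟨2*j.1, by have := j.isLt; omega⟩
        + g ⟨2*j.1+1, by have := j.isLt; omega⟩)
      = ∑ i, g i := by
  rw [Finset.sum_add_distrib]
  rw [← Finset.sum_filter_add_sum_filter_not univ (fun i : Fin (2*m+1+1) => i.1 % 2 = 0) g]
  congr 1
  · refine Finset.sum_nbij' (fun j : Fin (m+1) => (⟨2*j.1, by have := j.isLt; omega⟩ : Fin (2*m+1+1)))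
      (fun i : Fin (2*m+1+1) => (⟨i.1/2, by have := i.isLt; omega⟩ : Fin (m+1))) ?_ ?_ ?_ ?_ ?_
    · intro a _; simp
    · intro a ha; exact Finset.mem_univ _
    · intro a _; apply Fin.ext; simp
    · intro a ha
      simp only [Finset.mem_filter] at ha
      apply Fin.ext; simp; omega
    · intro a _; rfl
  · refine Finset.sum_nbij' (fun j : Fin (m+1) => (⟨2*j.1+1, by have := j.isLt; omega⟩ : Fin (2*m+1+1)))
      (fun i : Fin (2*m+1+1) => (⟨i.1/2, by have := i.isLt; omega⟩ : Fin (m+1))) ?_ ?_ ?_ ?_ ?_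
    · intro a _; simp
    · intro a ha; exact Finset.mem_univ _
    · intro a _; apply Fin.ext; simp; omega
    · intro a ha
      simp only [Finset.mem_filter, Finset.mem_univ, true_and] at ha
      apply Fin.ext; simp; omega
    · intro a _; rfl

lemma sum_emb_le (B : V → ℝ) (hB0 : ∀ v, 0 ≤ B v) (hB1 : ∑ v, B v = 1)
    (f : Fin (2*m+1+1) ↪ V) : ∑ i, B (f i) ≤ 1 := by
  rw [← Finset.sum_image (f := B) (g := f)
    (fun x _ y _ h => f.injective h)]
  rw [← hB1]
  exact Finset.sum_le_sum_of_subset_of_nonneg (Finset.subset_univ _)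
    (fun v _ _ => hB0 v)

lemma odd_bound (A : Finset (V × V) → V → ℝ) (hA : ValidAdv A) :
    ((m : ℝ)+1) * ∑ f : Fin (2*m+1+1) ↪ V,
        (A (oddE f) (f 0) + A (oddE f) (f (Fin.last (2*m+1))))
      ≤ (Fintype.card (Fin (2*m+1+1) ↪ V) : ℝ) := by
  have key : ∀ j : Fin (m+1),
      ∑ f : Fin (2*m+1+1) ↪ V, (A (oddE f) (f 0) + A (oddE f) (f (Fin.last (2*m+1))))
        = ∑ f : Fin (2*m+1+1) ↪ V, (A (oddE f) (f ⟨2*j.1, by have := j.isLt; omega⟩)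
            + A (oddE f) (f ⟨2*j.1+1, by have := j.isLt; omega⟩)) := by
    intro j
    rw [Finset.sum_add_distrib, Finset.sum_add_distrib]
    congr 1
    · rw [← piPerm_zero j, sum_comp_odd A (piPerm m j) (piPerm_blocks j)]
    · rw [← rhoPerm_last j, sum_comp_odd A (rhoPerm m j) (rhoPerm_blocks j)]
  have step : ((m : ℝ)+1) * ∑ f : Fin (2*m+1+1) ↪ V,
      (A (oddE f) (f 0) + A (oddE f) (f (Fin.last (2*m+1))))
      = ∑ j : Fin (m+1), ∑ f : Fin (2*m+1+1) ↪ V,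
          (A (oddE f) (f ⟨2*j.1, by have := j.isLt; omega⟩)
            + A (oddE f) (f ⟨2*j.1+1, by have := j.isLt; omega⟩)) := by
    rw [Finset.sum_congr rfl (fun j _ => (key j).symm), Finset.sum_const,
      Finset.card_univ, Fintype.card_fin, nsmul_eq_mul]
    push_cast
    ring
  rw [step, Finset.sum_comm]
  calc ∑ f : Fin (2*m+1+1) ↪ V, ∑ j : Fin (m+1),
        (A (oddE f) (f ⟨2*j.1, by have := j.isLt; omega⟩)
          + A (oddE f) (f ⟨2*j.1+1, by have := j.isLt; omega⟩))
      = ∑ f : Fin (2*m+1+1) ↪ V, ∑ i, A (oddE f) (f i) := by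
        apply Finset.sum_congr rfl
        intro f _
        exact sum_parity (fun i => A (oddE f) (f i))
    _ ≤ ∑ _f : Fin (2*m+1+1) ↪ V, 1 := by
        apply Finset.sum_le_sum
        intro f _
        exact sum_emb_le _ (hA (oddE f)).1 (hA (oddE f)).2 f
    _ = (Fintype.card (Fin (2*m+1+1) ↪ V) : ℝ) := by
        rw [Finset.sum_const, Finset.card_univ, nsmul_eq_mul, mul_one]



/-- restriction of a path to its interior positions -/
def rst (f : Fin (2*m+1+1) ↪ V) : Fin (2*m) → V :=
  fun i => f ⟨i.1+1, by have := i.isLt; omega⟩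

/-- even edge set as a function of the interior -/
def Dset (g : Fin (2*m) → V) : Finset (V × V) :=
  (univ : Finset (Fin m)).image
    (fun j => (g ⟨2*j.1, by have := j.isLt; omega⟩, g ⟨2*j.1+1, by have := j.isLt; omega⟩))

lemma evenE_eq_D (f : Fin (2*m+1+1) ↪ V) : evenE f = Dset (rst f) := by
  rw [evenE_eq]; rfl

/-- extension of an injective interior by two new distinct endpoints -/
def extEmb (g : Fin (2*m) → V) (hginj : Function.Injective g) (a b : V)
    (ha : a ∉ Finset.image g univ) (hb : b ∉ Finset.image g univ) (hab : a ≠ b) :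
    Fin (2*m+1+1) ↪ V where
  toFun := fun i => if h1 : i.1 = 0 then a else if h2 : i.1 = 2*m+1 then b
    else g ⟨i.1-1, by have := i.isLt; omega⟩
  inj' := by
    intro x y h
    simp only at h
    by_cases hx0 : x.1 = 0
    · rw [dif_pos hx0] at h
      by_cases hy0 : y.1 = 0
      · apply Fin.ext; omega
      · rw [dif_neg hy0] at h
        by_cases hyL : y.1 = 2*m+1
        · rw [dif_pos hyL] at h; exact (hab h).elim
        · rw [dif_neg hyL] at h
          exact (ha (by rw [h]; exact Finset.mem_image_of_mem g (Finset.mem_univ _))).elim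
    · rw [dif_neg hx0] at h
      by_cases hxL : x.1 = 2*m+1
      · rw [dif_pos hxL] at h
        by_cases hy0 : y.1 = 0
        · rw [dif_pos hy0] at h; exact (hab h.symm).elim
        · rw [dif_neg hy0] at h
          by_cases hyL : y.1 = 2*m+1
          · apply Fin.ext; omega
          · rw [dif_neg hyL] at h
            exact (hb (by rw [h]; exact Finset.mem_image_of_mem g (Finset.mem_univ _))).elim
      · rw [dif_neg hxL] at h
        by_cases hy0 : y.1 = 0
        · rw [dif_pos hy0] at h
          exact (ha (by rw [← h]; exact Finset.mem_image_of_mem g (Finset.mem_univ _))).elim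
        · rw [dif_neg hy0] at h
          by_cases hyL : y.1 = 2*m+1
          · rw [dif_pos hyL] at h
            exact (hb (by rw [← h]; exact Finset.mem_image_of_mem g (Finset.mem_univ _))).elim
          · rw [dif_neg hyL] at h
            have := hginj h
            rw [Fin.ext_iff] at this
            apply Fin.ext
            simp only at this
            omega

lemma extEmb_zero (g : Fin (2*m) → V) (hginj : Function.Injective g) (a b : V)
    (ha : a ∉ Finset.image g univ) (hb : b ∉ Finset.image g univ) (hab : a ≠ b) :
    extEmb g hginj a b ha hb hab 0 = a := by
  show (if h1 : (0 : Fin (2*m+1+1)).1 = 0 then a else if h2 : (0 : Fin (2*m+1+1)).1 = 2*m+1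
    then b else g ⟨(0 : Fin (2*m+1+1)).1-1, by simp at h1⟩) = a
  rw [dif_pos (by simp)]

lemma extEmb_last (g : Fin (2*m) → V) (hginj : Function.Injective g) (a b : V)
    (ha : a ∉ Finset.image g univ) (hb : b ∉ Finset.image g univ) (hab : a ≠ b) :
    extEmb g hginj a b ha hb hab (Fin.last (2*m+1)) = b := by
  show (if h1 : (Fin.last (2*m+1)).1 = 0 then a else if h2 : (Fin.last (2*m+1)).1 = 2*m+1
    then b else g ⟨(Fin.last (2*m+1)).1-1, by simp [Fin.val_last] at h2⟩) = b
  rw [dif_neg (by simp [Fin.val_last]), dif_pos (by simp [Fin.val_last])]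

lemma extEmb_mid (g : Fin (2*m) → V) (hginj : Function.Injective g) (a b : V)
    (ha : a ∉ Finset.image g univ) (hb : b ∉ Finset.image g univ) (hab : a ≠ b)
    (iv : ℕ) (hiv : iv < 2*m+1+1) (h1 : iv ≠ 0) (h2 : iv ≠ 2*m+1) :
    extEmb g hginj a b ha hb hab ⟨iv, hiv⟩ = g ⟨iv-1, by omega⟩ := by
  show (if hh1 : iv = 0 then a else if hh2 : iv = 2*m+1
    then b else g ⟨iv-1, by omega⟩) = _
  rw [dif_neg h1, dif_neg h2]

lemma rst_extEmb (g : Fin (2*m) → V) (hginj : Function.Injective g) (a b : V)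
    (ha : a ∉ Finset.image g univ) (hb : b ∉ Finset.image g univ) (hab : a ≠ b) :
    rst (extEmb g hginj a b ha hb hab) = g := by
  funext i
  have hi := i.isLt
  show extEmb g hginj a b ha hb hab ⟨i.1+1, by omega⟩ = g i
  rw [extEmb_mid g hginj a b ha hb hab (i.1+1) (by omega) (by omega) (by omega)]
  exact congrArg g (Fin.ext (by simp))


lemma sum_offdiag_fst (U : Finset V) (B : V → ℝ) :
    ∑ p ∈ (U ×ˢ U).filter (fun p : V × V => p.1 ≠ p.2), B p.1
      = ((U.card - 1 : ℕ) : ℝ) * ∑ v ∈ U, B v := by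
  rw [Finset.sum_filter, Finset.sum_product, Finset.mul_sum]
  apply Finset.sum_congr rfl
  intro a ha
  calc ∑ b ∈ U, (if a ≠ b then B a else 0)
      = ∑ _b ∈ U.filter (fun b => a ≠ b), B a := (Finset.sum_filter _ _).symm
    _ = (U.erase a).card • B a := by rw [Finset.filter_ne, Finset.sum_const]
    _ = ((U.card - 1 : ℕ) : ℝ) * B a := by
        rw [Finset.card_erase_of_mem ha, nsmul_eq_mul]

lemma sum_offdiag_snd (U : Finset V) (B : V → ℝ) (hU1 : 1 ≤ U.card) :
    ∑ p ∈ (U ×ˢ U).filter (fun p : V × V => p.1 ≠ p.2), B p.2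
      = ((U.card - 1 : ℕ) : ℝ) * ∑ v ∈ U, B v := by
  rw [Finset.sum_filter, Finset.sum_product]
  have h1 : ∀ a ∈ U, ∑ b ∈ U, (if a ≠ b then B b else 0)
      = (∑ v ∈ U, B v) - B a := by
    intro a ha
    calc ∑ b ∈ U, (if a ≠ b then B b else 0)
        = ∑ b ∈ U.filter (fun b => a ≠ b), B b := (Finset.sum_filter _ _).symm
      _ = ∑ b ∈ U.erase a, B b := by rw [Finset.filter_ne]
      _ = (∑ v ∈ U, B v) - B a := Finset.sum_erase_eq_sub ha
  rw [Finset.sum_congr rfl h1, Finset.sum_sub_distrib, Finset.sum_const, nsmul_eq_mul]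
  rw [Nat.cast_sub hU1]
  push_cast
  ring

lemma card_offdiag (U : Finset V) :
    ((U ×ˢ U).filter (fun p : V × V => p.1 ≠ p.2)).card = U.card * (U.card - 1) := by
  rw [Finset.card_filter, Finset.sum_product]
  have h1 : ∀ a ∈ U, (∑ b ∈ U, if (a, b).1 ≠ (a, b).2 then 1 else 0) = U.card - 1 := by
    intro a ha
    calc (∑ b ∈ U, if (a, b).1 ≠ (a, b).2 then 1 else 0)
        = (U.filter (fun b => a ≠ b)).card := (Finset.card_filter _ _).symm
      _ = U.card - 1 := by rw [Finset.filter_ne, Finset.card_erase_of_mem ha]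
  rw [Finset.sum_congr rfl h1, Finset.sum_const, smul_eq_mul]

lemma even_fiber_bound (A : Finset (V × V) → V → ℝ) (hA : ValidAdv A)
    (g : Fin (2*m) → V) :
    ((Fintype.card V - 2*m : ℕ) : ℝ) *
      ∑ f ∈ univ.filter (fun f : Fin (2*m+1+1) ↪ V => rst f = g),
        (A (evenE f) (f 0) + A (evenE f) (f (Fin.last (2*m+1))))
      ≤ 2 * ((univ.filter (fun f : Fin (2*m+1+1) ↪ V => rst f = g)).card : ℝ) := by
  by_cases hne : (univ.filter (fun f : Fin (2*m+1+1) ↪ V => rst f = g)).Nonempty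
  swap
  · rw [Finset.not_nonempty_iff_eq_empty] at hne
    rw [hne]
    simp
  obtain ⟨f0, hf0⟩ := hne
  have hg : rst f0 = g := (Finset.mem_filter.mp hf0).2
  have hginj : Function.Injective g := by
    intro x y h
    rw [← hg] at h
    have h' : f0 ⟨x.1+1, by have := x.isLt; omega⟩ = f0 ⟨y.1+1, by have := y.isLt; omega⟩ := h
    have := f0.injective h'
    rw [Fin.ext_iff] at this
    apply Fin.ext
    simp only at this
    omega
  set U := (univ : Finset V) \ Finset.image g univ with hUdef
  have hU : U.card = Fintype.card V - 2*m := by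
    rw [hUdef, Finset.card_sdiff_of_subset (Finset.subset_univ _), Finset.card_univ,
      Finset.card_image_of_injective _ hginj, Finset.card_univ, Fintype.card_fin]
  have hU2 : 2 ≤ Fintype.card V - 2*m ∨ True := Or.inr trivial
  -- membership facts for fibers
  have hmem0 : ∀ f : Fin (2*m+1+1) ↪ V, rst f = g → f 0 ∈ U := by
    intro f hf
    rw [hUdef, Finset.mem_sdiff]
    refine ⟨Finset.mem_univ _, ?_⟩
    rw [← hf]
    rintro hc
    rw [Finset.mem_image] at hc
    obtain ⟨i, _, hi⟩ := hc
    have : f ⟨i.1+1, by have := i.isLt; omega⟩ = f 0 := hi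
    rw [finj f] at this
    simp at this
  have hmemL : ∀ f : Fin (2*m+1+1) ↪ V, rst f = g → f (Fin.last (2*m+1)) ∈ U := by
    intro f hf
    rw [hUdef, Finset.mem_sdiff]
    refine ⟨Finset.mem_univ _, ?_⟩
    rw [← hf]
    rintro hc
    rw [Finset.mem_image] at hc
    obtain ⟨i, _, hi⟩ := hc
    have : f ⟨i.1+1, by have := i.isLt; omega⟩ = f (Fin.last (2*m+1)) := hi
    rw [finj f] at this
    simp [Fin.val_last] at this
    have := i.isLt
    omega
  have hne0L : ∀ f : Fin (2*m+1+1) ↪ V, f 0 ≠ f (Fin.last (2*m+1)) := by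
    intro f hc
    rw [finj f] at hc
    simp [Fin.val_last] at hc
  -- transport sum and card to the off-diagonal pair set
  have htrans : ∑ f ∈ univ.filter (fun f : Fin (2*m+1+1) ↪ V => rst f = g),
      (A (evenE f) (f 0) + A (evenE f) (f (Fin.last (2*m+1))))
      = ∑ p ∈ (U ×ˢ U).filter (fun p : V × V => p.1 ≠ p.2),
          (A (Dset g) p.1 + A (Dset g) p.2) := by
    refine Finset.sum_bij' (fun f _ => (f 0, f (Fin.last (2*m+1))))
      (fun p hp => extEmb g hginj p.1 p.2
        (Finset.mem_sdiff.mp (Finset.mem_product.mp (Finset.mem_filter.mp hp).1).1).2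
        (Finset.mem_sdiff.mp (Finset.mem_product.mp (Finset.mem_filter.mp hp).1).2).2
        (Finset.mem_filter.mp hp).2) ?_ ?_ ?_ ?_ ?_
    · intro f hf
      have hfg := (Finset.mem_filter.mp hf).2
      rw [Finset.mem_filter, Finset.mem_product]
      exact ⟨⟨hmem0 f hfg, hmemL f hfg⟩, hne0L f⟩
    · intro p hp
      rw [Finset.mem_filter]
      exact ⟨Finset.mem_univ _, rst_extEmb _ _ _ _ _ _ _⟩
    · intro f hf
      have hfg := (Finset.mem_filter.mp hf).2
      apply DFunLike.ext
      intro x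
      by_cases hx0 : x.1 = 0
      · have hx : x = 0 := Fin.ext (by simpa using hx0)
        rw [hx, extEmb_zero]
      · by_cases hxL : x.1 = 2*m+1
        · have hx : x = Fin.last (2*m+1) := Fin.ext (by simpa [Fin.val_last] using hxL)
          rw [hx, extEmb_last]
        · have hx : x = (⟨x.1, x.isLt⟩ : Fin (2*m+1+1)) := Fin.ext rfl
          rw [hx, extEmb_mid _ _ _ _ _ _ _ x.1 x.isLt hx0 hxL]
          rw [← hfg]
          show f ⟨x.1-1+1, _⟩ = f ⟨x.1, x.isLt⟩
          exact congrArg f (Fin.ext (by simp; omega))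
    · intro p hp
      have := extEmb_zero g hginj p.1 p.2
        (Finset.mem_sdiff.mp (Finset.mem_product.mp (Finset.mem_filter.mp hp).1).1).2
        (Finset.mem_sdiff.mp (Finset.mem_product.mp (Finset.mem_filter.mp hp).1).2).2
        (Finset.mem_filter.mp hp).2
      have h2 := extEmb_last g hginj p.1 p.2
        (Finset.mem_sdiff.mp (Finset.mem_product.mp (Finset.mem_filter.mp hp).1).1).2
        (Finset.mem_sdiff.mp (Finset.mem_product.mp (Finset.mem_filter.mp hp).1).2).2
        (Finset.mem_filter.mp hp).2
      rw [Prod.ext_iff]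
      exact ⟨this, h2⟩
    · intro f hf
      have hfg := (Finset.mem_filter.mp hf).2
      rw [evenE_eq_D f, hfg]
  have hcard : (univ.filter (fun f : Fin (2*m+1+1) ↪ V => rst f = g)).card
      = ((U ×ˢ U).filter (fun p : V × V => p.1 ≠ p.2)).card := by
    refine Finset.card_bij' (fun f _ => (f 0, f (Fin.last (2*m+1))))
      (fun p hp => extEmb g hginj p.1 p.2
        (Finset.mem_sdiff.mp (Finset.mem_product.mp (Finset.mem_filter.mp hp).1).1).2
        (Finset.mem_sdiff.mp (Finset.mem_product.mp (Finset.mem_filter.mp hp).1).2).2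
        (Finset.mem_filter.mp hp).2) ?_ ?_ ?_ ?_
    · intro f hf
      have hfg := (Finset.mem_filter.mp hf).2
      rw [Finset.mem_filter, Finset.mem_product]
      exact ⟨⟨hmem0 f hfg, hmemL f hfg⟩, hne0L f⟩
    · intro p hp
      rw [Finset.mem_filter]
      exact ⟨Finset.mem_univ _, rst_extEmb _ _ _ _ _ _ _⟩
    · intro f hf
      have hfg := (Finset.mem_filter.mp hf).2
      apply DFunLike.ext
      intro x
      by_cases hx0 : x.1 = 0
      · have hx : x = 0 := Fin.ext (by simpa using hx0)
        rw [hx, extEmb_zero]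
      · by_cases hxL : x.1 = 2*m+1
        · have hx : x = Fin.last (2*m+1) := Fin.ext (by simpa [Fin.val_last] using hxL)
          rw [hx, extEmb_last]
        · have hx : x = (⟨x.1, x.isLt⟩ : Fin (2*m+1+1)) := Fin.ext rfl
          rw [hx, extEmb_mid _ _ _ _ _ _ _ x.1 x.isLt hx0 hxL]
          rw [← hfg]
          show f ⟨x.1-1+1, _⟩ = f ⟨x.1, x.isLt⟩
          exact congrArg f (Fin.ext (by simp; omega))
    · intro p hp
      have := extEmb_zero g hginj p.1 p.2
        (Finset.mem_sdiff.mp (Finset.mem_product.mp (Finset.mem_filter.mp hp).1).1).2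
        (Finset.mem_sdiff.mp (Finset.mem_product.mp (Finset.mem_filter.mp hp).1).2).2
        (Finset.mem_filter.mp hp).2
      have h2 := extEmb_last g hginj p.1 p.2
        (Finset.mem_sdiff.mp (Finset.mem_product.mp (Finset.mem_filter.mp hp).1).1).2
        (Finset.mem_sdiff.mp (Finset.mem_product.mp (Finset.mem_filter.mp hp).1).2).2
        (Finset.mem_filter.mp hp).2
      rw [Prod.ext_iff]
      exact ⟨this, h2⟩
  have hU1 : 1 ≤ U.card := by
    have hf0U := hmem0 f0 hg
    exact Finset.card_pos.mpr ⟨f0 0, hf0U⟩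
  have hSle : ∑ v ∈ U, A (Dset g) v ≤ 1 := by
    rw [← (hA (Dset g)).2]
    exact Finset.sum_le_sum_of_subset_of_nonneg (Finset.subset_univ _)
      (fun v _ _ => (hA (Dset g)).1 v)
  have hSnn : 0 ≤ ∑ v ∈ U, A (Dset g) v :=
    Finset.sum_nonneg (fun v _ => (hA (Dset g)).1 v)
  rw [htrans, hcard, Finset.sum_add_distrib, sum_offdiag_fst U, sum_offdiag_snd U _ hU1,
    card_offdiag U, ← hU]
  have hcast : ((U.card * (U.card - 1) : ℕ) : ℝ) = (U.card : ℝ) * ((U.card - 1 : ℕ) : ℝ) := by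
    push_cast [Nat.cast_sub hU1]
    ring
  rw [hcast]
  set S := ∑ v ∈ U, A (Dset g) v
  set c := ((U.card - 1 : ℕ) : ℝ)
  have hc : 0 ≤ c := Nat.cast_nonneg _
  have hu : 0 ≤ (U.card : ℝ) := Nat.cast_nonneg _
  nlinarith [mul_nonneg hu hc]


lemma even_bound (A : Finset (V × V) → V → ℝ) (hA : ValidAdv A) :
    ((Fintype.card V - 2*m : ℕ) : ℝ) * ∑ f : Fin (2*m+1+1) ↪ V,
        (A (evenE f) (f 0) + A (evenE f) (f (Fin.last (2*m+1))))
      ≤ 2 * (Fintype.card (Fin (2*m+1+1) ↪ V) : ℝ) := by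
  rw [← Finset.sum_fiberwise univ rst
    (fun f : Fin (2*m+1+1) ↪ V => A (evenE f) (f 0) + A (evenE f) (f (Fin.last (2*m+1))))]
  rw [Finset.mul_sum]
  calc ∑ g : Fin (2*m) → V, ((Fintype.card V - 2*m : ℕ) : ℝ) *
        ∑ f ∈ univ.filter (fun f : Fin (2*m+1+1) ↪ V => rst f = g),
          (A (evenE f) (f 0) + A (evenE f) (f (Fin.last (2*m+1))))
      ≤ ∑ g : Fin (2*m) → V,
          2 * ((univ.filter (fun f : Fin (2*m+1+1) ↪ V => rst f = g)).card : ℝ) :=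
        Finset.sum_le_sum (fun g _ => even_fiber_bound A hA g)
    _ = 2 * (Fintype.card (Fin (2*m+1+1) ↪ V) : ℝ) := by
        rw [← Finset.mul_sum]
        congr 1
        have := Finset.card_eq_sum_card_fiberwise
          (f := rst (V := V) (m := m)) (s := univ) (t := univ)
          (fun x _ => Finset.mem_univ _)
        rw [Finset.card_univ] at this
        rw [← Nat.cast_sum]
        exact_mod_cast congrArg (Nat.cast : ℕ → ℝ) this.symm

lemma f_zero_ne_last (f : Fin (2*m+1+1) ↪ V) : f 0 ≠ f (Fin.last (2*m+1)) := by
  rw [Ne, finj f]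
  simp [Fin.val_last]

lemma pair_le_one (A : Finset (V × V) → V → ℝ) (hA : ValidAdv A) (Q : Finset (V × V))
    {u w : V} (h : u ≠ w) : A Q u + A Q w ≤ 1 := by
  rw [← (hA Q).2, ← Finset.sum_pair h]
  exact Finset.sum_le_sum_of_subset_of_nonneg (Finset.subset_univ _)
    (fun v _ _ => (hA Q).1 v)

lemma pedges_bound (A : Finset (V × V) → V → ℝ) (hA : ValidAdv A) :
    ∑ f : Fin (2*m+1+1) ↪ V, (A (pedges f) (f 0) + A (pedges f) (f (Fin.last (2*m+1))))
      ≤ (Fintype.card (Fin (2*m+1+1) ↪ V) : ℝ) := by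
  calc ∑ f : Fin (2*m+1+1) ↪ V, (A (pedges f) (f 0) + A (pedges f) (f (Fin.last (2*m+1))))
      ≤ ∑ _f : Fin (2*m+1+1) ↪ V, (1:ℝ) :=
        Finset.sum_le_sum (fun f _ => pair_le_one A hA _ (f_zero_ne_last f))
    _ = _ := by rw [Finset.sum_const, Finset.card_univ, nsmul_eq_mul, mul_one]

lemma emb_nonempty (hV : 2*m+1 < Fintype.card V) : Nonempty (Fin (2*m+1+1) ↪ V) := by
  apply Function.Embedding.nonempty_iff_card_le.mpr
  rw [Fintype.card_fin]
  omega


lemma exists_low (hm : 1 ≤ m) (hV : 2*m+1 < Fintype.card V) (α : ℝ)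
    (h0 : 0 ≤ α) (h2 : α ≤ 1/2) (A : Finset (V × V) → V → ℝ) (hA : ValidAdv A) :
    ∃ f : Fin (2*m+1+1) ↪ V, altSuccLow α A f
      ≤ α * (2*((2*m+2 : ℕ) : ℝ)⁻¹) + α * (2*((Fintype.card V - 2*m : ℕ) : ℝ)⁻¹)
        + (1-2*α) * (2*((Fintype.card V : ℕ) : ℝ)⁻¹) := by
  have hNE : Nonempty (Fin (2*m+1+1) ↪ V) := emb_nonempty hV
  have hNu : (univ : Finset (Fin (2*m+1+1) ↪ V)).Nonempty := Finset.univ_nonempty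
  set N : ℝ := (Fintype.card (Fin (2*m+1+1) ↪ V) : ℝ) with hN
  have hNpos : 0 < N := by
    rw [hN]
    exact_mod_cast Fintype.card_pos
  have hnpos : (0:ℝ) < (Fintype.card V : ℝ) := by exact_mod_cast by omega
  have hrpos : (0:ℝ) < ((Fintype.card V - 2*m : ℕ) : ℝ) := by exact_mod_cast by omega
  set c1 : ℝ := 2*((2*m+2 : ℕ) : ℝ)⁻¹ with hc1
  set c2 : ℝ := 2*((Fintype.card V - 2*m : ℕ) : ℝ)⁻¹ with hc2
  set c3 : ℝ := 2*((Fintype.card V : ℕ) : ℝ)⁻¹ with hc3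
  have hX : ∑ f : Fin (2*m+1+1) ↪ V,
      (A (oddE f) (f 0) + A (oddE f) (f (Fin.last (2*m+1)))) ≤ N * c1 := by
    have h := odd_bound (m := m) A hA
    have hm1 : (0:ℝ) < (m:ℝ)+1 := by positivity
    have hcc : c1 = ((m:ℝ)+1)⁻¹ := by
      rw [hc1]
      have : ((2*m+2 : ℕ) : ℝ) = 2*((m:ℝ)+1) := by push_cast; ring
      rw [this, mul_inv, ← mul_assoc, mul_inv_cancel₀ two_ne_zero, one_mul]
    rw [hcc]
    calc ∑ f : Fin (2*m+1+1) ↪ V,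
          (A (oddE f) (f 0) + A (oddE f) (f (Fin.last (2*m+1))))
        = ((m:ℝ)+1)⁻¹ * (((m:ℝ)+1) * ∑ f : Fin (2*m+1+1) ↪ V,
            (A (oddE f) (f 0) + A (oddE f) (f (Fin.last (2*m+1))))) := by
          field_simp
      _ ≤ ((m:ℝ)+1)⁻¹ * N := by gcongr
      _ = N * ((m:ℝ)+1)⁻¹ := mul_comm _ _
  have hY : ∑ f : Fin (2*m+1+1) ↪ V,
      (A (evenE f) (f 0) + A (evenE f) (f (Fin.last (2*m+1)))) ≤ N * c2 := by
    have h := even_bound (m := m) A hA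
    calc ∑ f : Fin (2*m+1+1) ↪ V,
          (A (evenE f) (f 0) + A (evenE f) (f (Fin.last (2*m+1))))
        = ((Fintype.card V - 2*m : ℕ) : ℝ)⁻¹ * (((Fintype.card V - 2*m : ℕ) : ℝ)
            * ∑ f : Fin (2*m+1+1) ↪ V,
              (A (evenE f) (f 0) + A (evenE f) (f (Fin.last (2*m+1))))) := by
          field_simp
      _ ≤ ((Fintype.card V - 2*m : ℕ) : ℝ)⁻¹ * (2 * N) := by gcongr
      _ = N * c2 := by rw [hc2]; ring
  have hZ : ∑ f : Fin (2*m+1+1) ↪ V, (A ∅ (f 0) + A ∅ (f (Fin.last (2*m+1)))) = N * c3 := by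
    rw [Finset.sum_add_distrib]
    have hz1 := sum_fiber hV (A ∅) (hA ∅).2 0
    have hz2 := sum_fiber hV (A ∅) (hA ∅).2 (Fin.last (2*m+1))
    rw [hc3]
    rw [show (∑ f : Fin (2*m+1+1) ↪ V, A ∅ (f 0)) = N / (Fintype.card V : ℝ) from by
      rw [eq_div_iff (ne_of_gt hnpos)]; rw [mul_comm]; exact hz1]
    rw [show (∑ f : Fin (2*m+1+1) ↪ V, A ∅ (f (Fin.last (2*m+1))))
        = N / (Fintype.card V : ℝ) from by
      rw [eq_div_iff (ne_of_gt hnpos)]; rw [mul_comm]; exact hz2]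
    field_simp
    ring
  have htot : ∑ f : Fin (2*m+1+1) ↪ V, altSuccLow α A f
      ≤ ∑ _f : Fin (2*m+1+1) ↪ V, (α * c1 + α * c2 + (1-2*α) * c3) := by
    have hexp : ∑ f : Fin (2*m+1+1) ↪ V, altSuccLow α A f
        = α * (∑ f : Fin (2*m+1+1) ↪ V,
            (A (oddE f) (f 0) + A (oddE f) (f (Fin.last (2*m+1)))))
          + α * (∑ f : Fin (2*m+1+1) ↪ V,
            (A (evenE f) (f 0) + A (evenE f) (f (Fin.last (2*m+1)))))
          + (1-2*α) * (∑ f : Fin (2*m+1+1) ↪ V,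
            (A ∅ (f 0) + A ∅ (f (Fin.last (2*m+1))))) := by
      unfold altSuccLow
      rw [Finset.sum_add_distrib, Finset.sum_add_distrib, ← Finset.mul_sum,
        ← Finset.mul_sum, ← Finset.mul_sum]
    rw [hexp, Finset.sum_const, Finset.card_univ, nsmul_eq_mul, ← hN]
    have hb1 : α * (∑ f : Fin (2*m+1+1) ↪ V,
        (A (oddE f) (f 0) + A (oddE f) (f (Fin.last (2*m+1))))) ≤ α * (N * c1) := by
      apply mul_le_mul_of_nonneg_left hX h0
    have hb2 : α * (∑ f : Fin (2*m+1+1) ↪ V,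
        (A (evenE f) (f 0) + A (evenE f) (f (Fin.last (2*m+1))))) ≤ α * (N * c2) := by
      apply mul_le_mul_of_nonneg_left hY h0
    have hb3 : (1-2*α) * (∑ f : Fin (2*m+1+1) ↪ V,
        (A ∅ (f 0) + A ∅ (f (Fin.last (2*m+1))))) = (1-2*α) * (N * c3) := by rw [hZ]
    calc _ ≤ α * (N * c1) + α * (N * c2) + (1-2*α) * (N * c3) := by
          rw [hb3]; exact add_le_add (add_le_add hb1 hb2) le_rfl
      _ = N * (α * c1 + α * c2 + (1-2*α) * c3) := by ring
  obtain ⟨f, _, hf⟩ := Finset.exists_le_of_sum_le hNu htot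
  exact ⟨f, hf⟩

lemma exists_high (hm : 1 ≤ m) (hV : 2*m+1 < Fintype.card V) (α : ℝ)
    (h0 : 1/2 < α) (h2 : α ≤ 1) (A : Finset (V × V) → V → ℝ) (hA : ValidAdv A) :
    ∃ f : Fin (2*m+1+1) ↪ V, altSuccHigh α A f
      ≤ (1-α) * (2*((2*m+2 : ℕ) : ℝ)⁻¹) + (1-α) * (2*((Fintype.card V - 2*m : ℕ) : ℝ)⁻¹)
        + (2*α-1) := by
  have hNE : Nonempty (Fin (2*m+1+1) ↪ V) := emb_nonempty hV
  have hNu : (univ : Finset (Fin (2*m+1+1) ↪ V)).Nonempty := Finset.univ_nonempty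
  set N : ℝ := (Fintype.card (Fin (2*m+1+1) ↪ V) : ℝ) with hN
  have hNpos : 0 < N := by
    rw [hN]
    exact_mod_cast Fintype.card_pos
  have hrpos : (0:ℝ) < ((Fintype.card V - 2*m : ℕ) : ℝ) := by exact_mod_cast by omega
  have h1a : 0 ≤ 1 - α := by linarith
  have h2a : 0 ≤ 2*α - 1 := by linarith
  set c1 : ℝ := 2*((2*m+2 : ℕ) : ℝ)⁻¹ with hc1
  set c2 : ℝ := 2*((Fintype.card V - 2*m : ℕ) : ℝ)⁻¹ with hc2
  have hX : ∑ f : Fin (2*m+1+1) ↪ V,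
      (A (oddE f) (f 0) + A (oddE f) (f (Fin.last (2*m+1)))) ≤ N * c1 := by
    have h := odd_bound (m := m) A hA
    have hm1 : (0:ℝ) < (m:ℝ)+1 := by positivity
    have hcc : c1 = ((m:ℝ)+1)⁻¹ := by
      rw [hc1]
      have : ((2*m+2 : ℕ) : ℝ) = 2*((m:ℝ)+1) := by push_cast; ring
      rw [this, mul_inv, ← mul_assoc, mul_inv_cancel₀ two_ne_zero, one_mul]
    rw [hcc]
    calc ∑ f : Fin (2*m+1+1) ↪ V,
          (A (oddE f) (f 0) + A (oddE f) (f (Fin.last (2*m+1))))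
        = ((m:ℝ)+1)⁻¹ * (((m:ℝ)+1) * ∑ f : Fin (2*m+1+1) ↪ V,
            (A (oddE f) (f 0) + A (oddE f) (f (Fin.last (2*m+1))))) := by
          field_simp
      _ ≤ ((m:ℝ)+1)⁻¹ * N := by gcongr
      _ = N * ((m:ℝ)+1)⁻¹ := mul_comm _ _
  have hY : ∑ f : Fin (2*m+1+1) ↪ V,
      (A (evenE f) (f 0) + A (evenE f) (f (Fin.last (2*m+1)))) ≤ N * c2 := by
    have h := even_bound (m := m) A hA
    calc ∑ f : Fin (2*m+1+1) ↪ V,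
          (A (evenE f) (f 0) + A (evenE f) (f (Fin.last (2*m+1))))
        = ((Fintype.card V - 2*m : ℕ) : ℝ)⁻¹ * (((Fintype.card V - 2*m : ℕ) : ℝ)
            * ∑ f : Fin (2*m+1+1) ↪ V,
              (A (evenE f) (f 0) + A (evenE f) (f (Fin.last (2*m+1))))) := by
          field_simp
      _ ≤ ((Fintype.card V - 2*m : ℕ) : ℝ)⁻¹ * (2 * N) := by gcongr
      _ = N * c2 := by rw [hc2]; ring
  have hP : ∑ f : Fin (2*m+1+1) ↪ V,
      (A (pedges f) (f 0) + A (pedges f) (f (Fin.last (2*m+1)))) ≤ N := pedges_bound A hA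
  have htot : ∑ f : Fin (2*m+1+1) ↪ V, altSuccHigh α A f
      ≤ ∑ _f : Fin (2*m+1+1) ↪ V, ((1-α) * c1 + (1-α) * c2 + (2*α-1)) := by
    have hexp : ∑ f : Fin (2*m+1+1) ↪ V, altSuccHigh α A f
        = (1-α) * (∑ f : Fin (2*m+1+1) ↪ V,
            (A (oddE f) (f 0) + A (oddE f) (f (Fin.last (2*m+1)))))
          + (1-α) * (∑ f : Fin (2*m+1+1) ↪ V,
            (A (evenE f) (f 0) + A (evenE f) (f (Fin.last (2*m+1)))))
          + (2*α-1) * (∑ f : Fin (2*m+1+1) ↪ V,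
            (A (pedges f) (f 0) + A (pedges f) (f (Fin.last (2*m+1))))) := by
      unfold altSuccHigh
      rw [Finset.sum_add_distrib, Finset.sum_add_distrib, ← Finset.mul_sum,
        ← Finset.mul_sum, ← Finset.mul_sum]
    rw [hexp, Finset.sum_const, Finset.card_univ, nsmul_eq_mul, ← hN]
    calc _ ≤ (1-α) * (N * c1) + (1-α) * (N * c2) + (2*α-1) * N := by
          exact add_le_add (add_le_add (mul_le_mul_of_nonneg_left hX h1a)
            (mul_le_mul_of_nonneg_left hY h1a)) (mul_le_mul_of_nonneg_left hP h2a)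
      _ = N * ((1-α) * c1 + (1-α) * c2 + (2*α-1)) := by ring
  obtain ⟨f, _, hf⟩ := Finset.exists_le_of_sum_le hNu htot
  exact ⟨f, hf⟩

end AltOdd

open AltOdd

/-- Alternating noise, odd path length: on the complete graph on n nodes with
paths all directed simple paths of fixed odd length L (3 ≤ L < n), the
alternating mechanism satisfies
Π = 1 − 2/n − (2/(L+1) + 2/(n−L+1) − 4/n)·α for α ∈ [0, 1/2], and
Π = (2 − 2/(L+1) − 2/(n−L+1))·(1 − α) for α ∈ (1/2, 1]. -/
theorem alternating_odd
    {V : Type} [Fintype V] [DecidableEq V]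
    (n L : ℕ) (hn : n = Fintype.card V)
    (hL3 : 3 ≤ L) (hLo : Odd L) (hLn : L < n)
    (α : ℝ) :
    (0 ≤ α → α ≤ 1 / 2 →
      altPrivLow V L α
        = 1 - 2 / n - (2 / ((L : ℝ) + 1) + 2 / ((n : ℝ) - L + 1) - 4 / n) * α) ∧
    (1 / 2 < α → α ≤ 1 →
      altPrivHigh V L α
        = (2 - 2 / ((L : ℝ) + 1) - 2 / ((n : ℝ) - L + 1)) * (1 - α)) := by
  obtain ⟨m, hm⟩ := hLo
  subst hm
  subst hn
  have hm1 : 1 ≤ m := by omega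
  have hV : 2*m+1 < Fintype.card V := hLn
  have hnpos : (0:ℝ) < (Fintype.card V : ℝ) := by exact_mod_cast by omega
  have hrpos : (0:ℝ) < ((Fintype.card V - 2*m : ℕ) : ℝ) := by exact_mod_cast by omega
  have hmpos : (0:ℝ) < ((2*m+2 : ℕ) : ℝ) := by exact_mod_cast by omega
  have e2 : ((Fintype.card V - 2*m : ℕ) : ℝ)
      = (Fintype.card V : ℝ) - ((2*m+1 : ℕ) : ℝ) + 1 := by
    have h2m : 2*m ≤ Fintype.card V := by omega
    push_cast [Nat.cast_sub h2m]
    ring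
  constructor
  · intro h0 h2
    set vLow : ℝ := α * (2*((2*m+2 : ℕ) : ℝ)⁻¹)
      + α * (2*((Fintype.card V - 2*m : ℕ) : ℝ)⁻¹)
      + (1-2*α) * (2*((Fintype.card V : ℕ) : ℝ)⁻¹) with hvLow
    have hsup : IsGreatest { x : ℝ | ∃ A, ValidAdv A ∧
        x = sInf { y : ℝ | ∃ f : Fin (2*m+1+1) ↪ V, y = altSuccLow α A f } } vLow := by
      constructor
      · refine ⟨Adv m, Adv_valid hm1 hV, ?_⟩
        have hset : { y : ℝ | ∃ f : Fin (2*m+1+1) ↪ V, y = altSuccLow α (Adv m) f }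
            = {vLow} := by
          ext y
          simp only [Set.mem_setOf_eq, Set.mem_singleton_iff]
          constructor
          · rintro ⟨f, rfl⟩
            exact succLow_const hm1 α f
          · rintro rfl
            obtain ⟨f⟩ := emb_nonempty hV
            exact ⟨f, (succLow_const hm1 α f).symm⟩
        rw [hset, csInf_singleton]
      · rintro x ⟨A, hA, rfl⟩
        obtain ⟨f, hf⟩ := exists_low hm1 hV α h0 h2 A hA
        have hbdd : BddBelow { y : ℝ | ∃ f : Fin (2*m+1+1) ↪ V, y = altSuccLow α A f } := by
          have hra : { y : ℝ | ∃ f : Fin (2*m+1+1) ↪ V, y = altSuccLow α A f }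
              = Set.range (fun f : Fin (2*m+1+1) ↪ V => altSuccLow α A f) := by
            ext y
            simp [eq_comm]
          rw [hra]
          exact (Set.finite_range _).bddBelow
        calc sInf { y : ℝ | ∃ f : Fin (2*m+1+1) ↪ V, y = altSuccLow α A f }
            ≤ altSuccLow α A f := csInf_le hbdd ⟨f, rfl⟩
          _ ≤ vLow := hf
    rw [altPrivLow, hsup.csSup_eq, hvLow]
    rw [e2]
    have d1 : ((2*m+1 : ℕ) : ℝ) + 1 ≠ 0 := by push_cast; positivity
    have d2 : (Fintype.card V : ℝ) - ((2*m+1 : ℕ) : ℝ) + 1 ≠ 0 := by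
      rw [← e2]; exact ne_of_gt hrpos
    have d3 : (Fintype.card V : ℝ) ≠ 0 := ne_of_gt hnpos
    have e1 : ((2*m+2 : ℕ) : ℝ) = ((2*m+1 : ℕ) : ℝ) + 1 := by push_cast; ring
    rw [e1]
    field_simp
    ring
  · intro h0 h2
    set vHigh : ℝ := (1-α) * (2*((2*m+2 : ℕ) : ℝ)⁻¹)
      + (1-α) * (2*((Fintype.card V - 2*m : ℕ) : ℝ)⁻¹)
      + (2*α-1) with hvHigh
    have hsup : IsGreatest { x : ℝ | ∃ A, ValidAdv A ∧
        x = sInf { y : ℝ | ∃ f : Fin (2*m+1+1) ↪ V, y = altSuccHigh α A f } } vHigh := by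
      constructor
      · refine ⟨Adv m, Adv_valid hm1 hV, ?_⟩
        have hset : { y : ℝ | ∃ f : Fin (2*m+1+1) ↪ V, y = altSuccHigh α (Adv m) f }
            = {vHigh} := by
          ext y
          simp only [Set.mem_setOf_eq, Set.mem_singleton_iff]
          constructor
          · rintro ⟨f, rfl⟩
            exact succHigh_const hm1 α f
          · rintro rfl
            obtain ⟨f⟩ := emb_nonempty hV
            exact ⟨f, (succHigh_const hm1 α f).symm⟩
        rw [hset, csInf_singleton]
      · rintro x ⟨A, hA, rfl⟩
        obtain ⟨f, hf⟩ := exists_high hm1 hV α h0 h2 A hA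
        have hbdd : BddBelow { y : ℝ | ∃ f : Fin (2*m+1+1) ↪ V, y = altSuccHigh α A f } := by
          have hra : { y : ℝ | ∃ f : Fin (2*m+1+1) ↪ V, y = altSuccHigh α A f }
              = Set.range (fun f : Fin (2*m+1+1) ↪ V => altSuccHigh α A f) := by
            ext y
            simp [eq_comm]
          rw [hra]
          exact (Set.finite_range _).bddBelow
        calc sInf { y : ℝ | ∃ f : Fin (2*m+1+1) ↪ V, y = altSuccHigh α A f }
            ≤ altSuccHigh α A f := csInf_le hbdd ⟨f, rfl⟩
          _ ≤ vHigh := hf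
    rw [altPrivHigh, hsup.csSup_eq, hvHigh]
    rw [e2]
    have d1 : ((2*m+1 : ℕ) : ℝ) + 1 ≠ 0 := by push_cast; positivity
    have d2 : (Fintype.card V : ℝ) - ((2*m+1 : ℕ) : ℝ) + 1 ≠ 0 := by
      rw [← e2]; exact ne_of_gt hrpos
    have d3 : (Fintype.card V : ℝ) ≠ 0 := ne_of_gt hnpos
    have e1 : ((2*m+2 : ℕ) : ℝ) = ((2*m+1 : ℕ) : ℝ) + 1 := by push_cast; ring
    rw [e1]
    field_simp
    ring
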